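/- arXiv:1010.5728 — 2 statements merged into one kernel-verified Lean document; each statement's English description precedes it below -/
import Mathlib

section
/- Curvature tensor identity implies sectional curvature formula: if R(x,y,z,u) = (τ/6)[2g(x,u)g(y,z) - 2g(x,z)g(y,u) + f(x,u)f(y,z) - f(x,z)f(y,u)] where f(x,y) = g(qx,y) + g(x,qy), then for any x with g(x,x) ≠ 0 and x, qx linearly independent, the sectional curvature μ(x,qx) = R(x,qx,x,qx)/(g(x,x)g(qx,qx) - g(x,qx)²) equals -(τ/6)·(g(x,x) - g(x,qx))/(g(x,x) + g(x,qx)). -/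
open Matrix

noncomputable def gmat (A B : ℝ) : Matrix (Fin 3) (Fin 3) ℝ := Matrix.of fun i j => if i = j then A else B
noncomputable def qmat : Matrix (Fin 3) (Fin 3) ℝ := !![0,1,0; 0,0,1; 1,0,0]
noncomputable def fmat (A B : ℝ) : Matrix (Fin 3) (Fin 3) ℝ := Matrix.of fun i j => if i = j then 2*B else A + B
noncomputable def Jmat : Matrix (Fin 3) (Fin 3) ℝ := Matrix.of fun _ _ => 1
noncomputable def Phi : Matrix (Fin 3) (Fin 3) ℝ := Jmat - 1
noncomputable def Smat : Matrix (Fin 3) (Fin 3) ℝ := Jmat - 2 • (1 : Matrix (Fin 3) (Fin 3) ℝ)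
noncomputable def gb (A B : ℝ) (u v : Fin 3 → ℝ) : ℝ := u ⬝ᵥ (gmat A B).mulVec v
noncomputable def fb (A B : ℝ) (u v : Fin 3 → ℝ) : ℝ := gb A B (qmat.mulVec u) v + gb A B u (qmat.mulVec v)
noncomputable def Rt (A B τ : ℝ) (x y z u : Fin 3 → ℝ) : ℝ :=
  (τ/6) * (2 * gb A B x u * gb A B y z - 2 * gb A B x z * gb A B y u
    + fb A B x u * fb A B y z - fb A B x z * fb A B y u)

lemma qmul (x : Fin 3 → ℝ) : qmat.mulVec x = ![x 1, x 2, x 0] := by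
  funext i
  fin_cases i <;>
    simp [qmat, Matrix.mulVec, dotProduct, Fin.sum_univ_three]

lemma gbval (A B : ℝ) (u v : Fin 3 → ℝ) :
    gb A B u v = A * (u 0 * v 0 + u 1 * v 1 + u 2 * v 2)
      + B * (u 0 * v 1 + u 0 * v 2 + u 1 * v 0 + u 1 * v 2 + u 2 * v 0 + u 2 * v 1) := by
  simp [gb, gmat, Matrix.mulVec, dotProduct, Fin.sum_univ_three, Fin.ext_iff, -Fin.val_eq_zero_iff]
  ring

theorem stmt16 (A B τ : ℝ) (hB : 0 < B) (hAB : B < A) (x : Fin 3 → ℝ)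
    (hx : gb A B x x ≠ 0) (hli : LinearIndependent ℝ ![x, qmat.mulVec x]) :
    Rt A B τ x (qmat.mulVec x) x (qmat.mulVec x) /
      (gb A B x x * gb A B (qmat.mulVec x) (qmat.mulVec x) - (gb A B x (qmat.mulVec x))^2)
    = -(τ/6) * (gb A B x x - gb A B x (qmat.mulVec x)) / (gb A B x x + gb A B x (qmat.mulVec x)) := by
  have h1 : gb A B (qmat.mulVec x) (qmat.mulVec x) = gb A B x x := by
    simp only [qmul, gbval]
    simp [Matrix.cons_val_zero, Matrix.cons_val_one]
    ring
  have h2 : Rt A B τ x (qmat.mulVec x) x (qmat.mulVec x)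
      = -(τ/6) * (gb A B x x - gb A B x (qmat.mulVec x))^2 := by
    simp only [Rt, fb, qmul, gbval]
    simp [Matrix.cons_val_zero, Matrix.cons_val_one]
    ring
  rw [h1, h2]
  set a := gb A B x x
  set b := gb A B x (qmat.mulVec x)
  rcases eq_or_ne (a - b) 0 with h | h
  · have hab : a = b := by linarith
    simp [hab]
  · have hd : a * a - b^2 = (a - b) * (a + b) := by ring
    rw [hd]
    rcases eq_or_ne (a + b) 0 with h2' | h2'
    · simp [h2']
    · field_simp
end

section
/- Special case: if g(x, qx) = 0 and g(x,x) ≠ 0, then with R as in the curvature formula, the sectional curvature μ(x, qx) = R(x,qx,x,qx)/(g(x,x)g(qx,qx) - g(x,qx)²) equals -τ/6. -/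
open Matrix

theorem stmt17 (A B τ : ℝ) (hB : 0 < B) (hAB : B < A) (x : Fin 3 → ℝ)
    (h0 : gb A B x (qmat.mulVec x) = 0) (hx : 0 < gb A B x x) :
    Rt A B τ x (qmat.mulVec x) x (qmat.mulVec x) /
      (gb A B x x * gb A B (qmat.mulVec x) (qmat.mulVec x) - (gb A B x (qmat.mulVec x))^2)
    = -(τ/6) := by
  have e1 : gb A B (qmat.mulVec x) (qmat.mulVec x) = gb A B x x := by
    simp [gb, gmat, qmat, Matrix.mulVec, dotProduct, Fin.sum_univ_three,
      Matrix.cons_val_zero, Matrix.cons_val_one, Matrix.head_cons, Matrix.vecHead,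
      Matrix.vecTail, Function.comp]
    ring
  have main : Rt A B τ x (qmat.mulVec x) x (qmat.mulVec x)
      = -(τ/6) * (gb A B x x * gb A B (qmat.mulVec x) (qmat.mulVec x)
          - (gb A B x (qmat.mulVec x))^2)
        + (τ/6) * (2 * gb A B x x - 2 * gb A B x (qmat.mulVec x))
            * gb A B x (qmat.mulVec x) := by
    simp [Rt, fb, gb, gmat, qmat, Matrix.mulVec, dotProduct, Fin.sum_univ_three,
      Matrix.cons_val_zero, Matrix.cons_val_one, Matrix.head_cons, Matrix.vecHead,
      Matrix.vecTail, Function.comp]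
    ring
  rw [main, h0, e1]
  have hG : gb A B x x ≠ 0 := ne_of_gt hx
  field_simp
  ring
end
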